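/- Let G be a 2-connected multigraph and let T^start and T^goal be spanning trees of G. Then there exists a finite sequence of spanning trees T^0 = T^start, T^1, ..., T^k = T^goal such that for each i, T^i is obtained from T^{i-1} by removing a single leaf edge of T^{i-1} and adding a single edge of G not in T^{i-1}. -/

import Mathlib

open Finset

noncomputable section
open scoped Classical

/-- A finite multigraph without loops: each edge has an unordered pair of
distinct endpoints. -/
structure Multigraph (V E : Type) where
  ends : E → Sym2 V
  loopless : ∀ e, ¬ (ends e).IsDiag

/-- A ribbon structure: for each vertex, a "next edge" map describing the
cyclic ordering of the edges incident to that vertex. -/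
structure RibbonStruct (V E : Type) where
  next : V → E → E

/-- The group of degree-zero divisors on the vertex set `V`. -/
def Div0 (V : Type) [Fintype V] : AddSubgroup (V → ℤ) where
  carrier := {D | ∑ v, D v = 0}
  add_mem' := by
    intro a b ha hb
    simp only [Set.mem_setOf_eq, Pi.add_apply, Finset.sum_add_distrib] at *
    omega
  zero_mem' := by simp
  neg_mem' := by
    intro a ha
    simp only [Set.mem_setOf_eq, Pi.neg_apply, Finset.sum_neg_distrib] at *
    omega

/-- The divisor `c - s`. -/
def chipDiv {V : Type} [DecidableEq V] (c s : V) : V → ℤ :=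
  fun v => (if v = c then 1 else 0) - (if v = s then 1 else 0)

namespace Multigraph

variable {V E : Type} [Fintype V] [Fintype E] [DecidableEq V] [DecidableEq E]

/-- Two vertices are adjacent if they are the two endpoints of some edge. -/
def Adj (G : Multigraph V E) (x y : V) : Prop := ∃ e : E, G.ends e = s(x, y)

/-- A multigraph is connected if any two vertices are joined by a walk. -/
def Connected (G : Multigraph V E) : Prop := ∀ x y : V, Relation.ReflTransGen G.Adj x y

/-- Adjacency using only edges from the set `T`. -/
def AdjOn (G : Multigraph V E) (T : Finset E) (x y : V) : Prop := ∃ e ∈ T, G.ends e = s(x, y)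

/-- Reachability using only edges from the set `T`. -/
def ReachOn (G : Multigraph V E) (T : Finset E) (x y : V) : Prop :=
  Relation.ReflTransGen (G.AdjOn T) x y

/-- A spanning tree: a spanning connected edge set of the correct cardinality. -/
def IsSpanningTree (G : Multigraph V E) (T : Finset E) : Prop :=
  (∀ x y : V, G.ReachOn T x y) ∧ T.card = Fintype.card V - 1

/-- The degree of a vertex: the number of incident edges. -/
def degree (G : Multigraph V E) (v : V) : ℕ := (univ.filter fun e => v ∈ G.ends e).card

/-- The number of edges of `T` incident to `v`. -/
def treeDegree (G : Multigraph V E) (T : Finset E) (v : V) : ℕ :=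
  (T.filter fun e => v ∈ G.ends e).card

/-- A leaf vertex of `T`: incident to exactly one edge of `T`. -/
def IsLeafVertex (G : Multigraph V E) (T : Finset E) (v : V) : Prop := G.treeDegree T v = 1

/-- A leaf edge of `T`: an edge of `T` incident to a leaf vertex. -/
def IsLeafEdge (G : Multigraph V E) (T : Finset E) (e : E) : Prop :=
  e ∈ T ∧ ∃ v, v ∈ G.ends e ∧ G.IsLeafVertex T v

/-- Adjacency within `T` avoiding the vertex `x`. -/
def AdjOnAvoid (G : Multigraph V E) (T : Finset E) (x : V) (a b : V) : Prop :=
  G.AdjOn T a b ∧ a ≠ x ∧ b ≠ x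

/-- "The path in `T` from `a` to `r` passes through `y`": `a` cannot reach `r`
within `T` while avoiding the vertex `y`. -/
def PathThrough (G : Multigraph V E) (T : Finset E) (r a y : V) : Prop :=
  ¬ Relation.ReflTransGen (G.AdjOnAvoid T y) a r

/-- Adjacency in `G` avoiding the vertex `x`. -/
def AdjAvoid (G : Multigraph V E) (x : V) (a b : V) : Prop := G.Adj a b ∧ a ≠ x ∧ b ≠ x

/-- 2-connected: connected and with no cut vertices. -/
def TwoConnected (G : Multigraph V E) : Prop :=
  G.Connected ∧ ∀ x a b : V, a ≠ x → b ≠ x →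
    Relation.ReflTransGen (G.AdjAvoid x) a b

/-- The row of the Laplacian matrix of `G` corresponding to the vertex `v`
(the divisor obtained by "firing" the vertex `v`, negated). -/
def lapRow (G : Multigraph V E) (v : V) : V → ℤ := fun w =>
  if w = v then (G.degree v : ℤ) else -((univ.filter fun e => G.ends e = s(v, w)).card : ℤ)

/-- The subgroup of divisors generated by the rows of the Laplacian, i.e. the
integer image of the Laplacian. -/
def LapSubgroup (G : Multigraph V E) : AddSubgroup (V → ℤ) :=
  AddSubgroup.closure (Set.range G.lapRow)

/-- Two divisors are firing equivalent when their difference lies in the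
integer image of the Laplacian. -/
def FiringEquiv (G : Multigraph V E) (D D' : V → ℤ) : Prop := D - D' ∈ G.LapSubgroup

/-- The sandpile group (Picard group) `Pic⁰(G)`:
degree-zero divisors modulo the image of the Laplacian. -/
def Pic0 (G : Multigraph V E) : Type :=
  Div0 V ⧸ ((G.LapSubgroup).addSubgroupOf (Div0 V))

instance (G : Multigraph V E) : AddCommGroup G.Pic0 :=
  QuotientAddGroup.Quotient.addCommGroup _

/-- The class in `Pic⁰(G)` of a degree-zero divisor. -/
def picClass (G : Multigraph V E) (D : V → ℤ) (hD : D ∈ Div0 V) : G.Pic0 :=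
  QuotientAddGroup.mk ⟨D, hD⟩

/-- `cfg` is the rotor configuration of the tree `T` with sink `s` (each
non-sink vertex carries the first edge of `T` on its path to `s`). -/
def IsRotorCfg (G : Multigraph V E) (s : V) (T : Finset E) (cfg : V → E) : Prop :=
  ∀ v, v ≠ s → cfg v ∈ T ∧ v ∈ G.ends (cfg v) ∧ ¬ G.ReachOn (T.erase (cfg v)) v s

/-- One step along the rotors of `cfg` (with sink `s`):
from `a ≠ s` across the rotor at `a` to its other endpoint `b`. -/
def RotorStep (G : Multigraph V E) (s : V) (cfg : V → E) (a b : V) : Prop :=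
  a ≠ s ∧ G.ends (cfg a) = s(a, b)

/-- A rotor configuration is acyclic: following rotors never returns to a
starting vertex. -/
def RotorAcyclic (G : Multigraph V E) (s : V) (cfg : V → E) : Prop :=
  ∀ a : V, ¬ Relation.TransGen (G.RotorStep s cfg) a a

/-- One step of the single-chip rotor-routing process: the state is a pair
(rotor configuration, chip position); the rotor at the chip's position is
rotated one step in the cyclic order `χ`, and the chip then moves across the
new rotor. -/
def RRStep (G : Multigraph V E) (χ : RibbonStruct V E) (p q : (V → E) × V) : Prop :=
  q.1 = Function.update p.1 p.2 (χ.next p.2 (p.1 p.2)) ∧ G.ends (q.1 p.2) = s(p.2, q.2)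

/-- A run of length `n` of the rotor-routing algorithm with sink `s`. -/
def IsRun (G : Multigraph V E) (χ : RibbonStruct V E) (s : V)
    (σ : ℕ → (V → E) × V) (n : ℕ) : Prop :=
  ∀ i, i < n → (σ i).2 ≠ s ∧ G.RRStep χ (σ i) (σ i.succ)

/-- At step `i` of the run `σ`, the chip crosses the edge `e` from `u` to `w`. -/
def Crosses (G : Multigraph V E) (σ : ℕ → (V → E) × V) (i : ℕ) (e : E) (u w : V) : Prop :=
  (σ i).2 = u ∧ (σ (i + 1)).2 = w ∧ (σ (i + 1)).1 u = e ∧ G.ends e = s(u, w)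

/-- A dart of `G`: an edge together with a chosen head. -/
def Dart (G : Multigraph V E) : Type := {p : E × V // p.2 ∈ G.ends p.1}

/-- The "next dart along a face" relation determined by the ribbon structure. -/
def FaceRel (G : Multigraph V E) (χ : RibbonStruct V E) (a b : G.Dart) : Prop :=
  b.1.1 = χ.next a.1.2 a.1.1 ∧ G.ends b.1.1 = s(a.1.2, b.1.2)

/-- The number of faces of the ribbon graph `(G, χ)`: the number of orbits of
the face map on darts. -/
def numFaces (G : Multigraph V E) (χ : RibbonStruct V E) : ℕ :=
  Nat.card (Quot (G.FaceRel χ))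

end Multigraph

/-- The axioms making `χ` an honest ribbon structure on `G`: at each vertex,
`next` is a bijection preserving the incident edges and acting transitively
(i.e. cyclically) on them. -/
def RibbonStruct.IsRibbon {V E : Type} [Fintype V] [Fintype E]
    (χ : RibbonStruct V E) (G : Multigraph V E) : Prop :=
  (∀ v : V, Function.Bijective (χ.next v)) ∧
  (∀ v e, v ∈ G.ends e → v ∈ G.ends (χ.next v e)) ∧
  (∀ v e f, v ∈ G.ends e → v ∈ G.ends f → ∃ m : ℕ, (χ.next v)^[m] e = f)

/-- A plane graph: a connected ribbon graph of genus 0 (Euler's formula). -/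
def Multigraph.IsPlane {V E : Type} [Fintype V] [Fintype E] [DecidableEq V] [DecidableEq E]
    (G : Multigraph V E) (χ : RibbonStruct V E) : Prop :=
  G.Connected ∧ χ.IsRibbon G ∧
    Fintype.card V + G.numFaces χ = Fintype.card E + 2

/-- An isomorphism of ribbon graphs: a pair of bijections on vertices and
edges preserving incidence and the cyclic orderings. -/
def IsRibbonIso {V E V' E' : Type}
    (G : Multigraph V E) (χ : RibbonStruct V E)
    (G' : Multigraph V' E') (χ' : RibbonStruct V' E')
    (φV : V ≃ V') (φE : E ≃ E') : Prop :=
  (∀ e, G'.ends (φE e) = (G.ends e).map φV) ∧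
  ∀ v e, v ∈ G.ends e → φE (χ.next v e) = χ'.next (φV v) (φE e)

set_option linter.unusedSectionVars false

namespace LEC

open Relation Multigraph Finset

variable {V E : Type} [Fintype V] [Fintype E] [DecidableEq V] [DecidableEq E]
variable {G : Multigraph V E}

/-- A single leaf-exchange step between spanning trees. -/
def StepRel (G : Multigraph V E) (T U : Finset E) : Prop :=
  G.IsSpanningTree U ∧ ∃ g f : E, G.IsLeafEdge T g ∧ f ∉ T ∧ U = insert f (T.erase g)

lemma ends_exists (G : Multigraph V E) (e : E) : ∃ a b : V, G.ends e = s(a, b) := by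
  obtain ⟨⟨a, b⟩, h⟩ := Quot.exists_rep (G.ends e)
  exact ⟨a, b, h.symm⟩

lemma ends_ne {e : E} {a b : V} (h : G.ends e = s(a, b)) : a ≠ b := by
  intro hab
  exact G.loopless e (by rw [h, Sym2.mk_isDiag_iff]; exact hab)

lemma adjOn_symm {S : Finset E} {a b : V} (h : G.AdjOn S a b) : G.AdjOn S b a := by
  obtain ⟨e, he, h2⟩ := h
  exact ⟨e, he, by rw [h2, Sym2.eq_swap]⟩

lemma reachOn_symm {S : Finset E} {a b : V} (h : G.ReachOn S a b) : G.ReachOn S b a := by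
  induction h with
  | refl => exact .refl
  | tail _ h2 ih => exact Relation.ReflTransGen.head (adjOn_symm h2) ih

lemma reachOn_mono {S S' : Finset E} (hs : S ⊆ S') {a b : V} (h : G.ReachOn S a b) :
    G.ReachOn S' a b :=
  Relation.ReflTransGen.mono (fun _ _ ⟨e, he, hh⟩ => ⟨e, hs he, hh⟩) _ _ h

/-- Excision of a degree-≤1 vertex `x` from a walk between vertices other than `x`. -/
lemma avoid {S : Finset E} {x u : V}
    (hu : ∀ e ∈ S, x ∈ G.ends e → G.ends e = s(x, u)) (hux : u ≠ x)
    {a b : V} (ha : a ≠ x) (hb : b ≠ x)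
    (h : Relation.ReflTransGen (G.AdjOn S) a b) :
    Relation.ReflTransGen (G.AdjOnAvoid S x) a b := by
  have key : ∀ c, Relation.ReflTransGen (G.AdjOn S) c b →
      Relation.ReflTransGen (G.AdjOnAvoid S x) (if c = x then u else c) b := by
    intro c hc
    induction hc using Relation.ReflTransGen.head_induction_on with
    | refl => rw [if_neg hb]
    | @head p q hpq hqb ih =>
      obtain ⟨e, he, hends⟩ := hpq
      by_cases hp : p = x
      · by_cases hq : q = x
        · exact absurd (by rw [hends, Sym2.mk_isDiag_iff, hp, hq] : (G.ends e).IsDiag)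
            (G.loopless e)
        · have h1 : G.ends e = s(x, u) := hu e he (by rw [hends, hp]; exact Sym2.mem_mk_left _ _)
          have hqu : q = u := by
            rw [hends, hp] at h1
            rcases Sym2.eq_iff.mp h1 with ⟨_, h⟩ | ⟨hxu', _⟩
            · exact h
            · exact absurd hxu'.symm hux
          rw [if_pos hp]
          rw [if_neg hq] at ih
          exact hqu ▸ ih
      · by_cases hq : q = x
        · have h1 : G.ends e = s(x, u) := hu e he (by rw [hends, hq]; exact Sym2.mem_mk_right _ _)
          have hpu : p = u := by
            rw [hends, hq] at h1
            rcases Sym2.eq_iff.mp h1 with ⟨hpx, _⟩ | ⟨h, _⟩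
            · exact absurd hpx hp
            · exact h
          rw [if_neg hp, hpu]
          rw [if_pos hq] at ih
          exact ih
        · rw [if_neg hp]
          refine Relation.ReflTransGen.head ⟨⟨e, he, hends⟩, hp, hq⟩ ?_
          rw [if_neg hq] at ih
          exact ih
  have := key a h
  rwa [if_neg ha] at this

lemma adjOnAvoid_iff {S : Finset E} {y a b : V} :
    G.AdjOnAvoid S y a b ↔ G.AdjOn (S.filter fun e => ¬ y ∈ G.ends e) a b := by
  constructor
  · rintro ⟨⟨e, he, hends⟩, ha, hb⟩
    refine ⟨e, Finset.mem_filter.mpr ⟨he, ?_⟩, hends⟩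
    rw [hends, Sym2.mem_iff]
    push_neg
    exact ⟨Ne.symm ha, Ne.symm hb⟩
  · rintro ⟨e, he, hends⟩
    rw [Finset.mem_filter] at he
    have hmem : ¬ y ∈ G.ends e := he.2
    rw [hends, Sym2.mem_iff] at hmem
    push_neg at hmem
    exact ⟨⟨e, he.1, hends⟩, Ne.symm hmem.1, Ne.symm hmem.2⟩

/-- Case analysis for reachability after inserting one edge. -/
lemma reachOn_insert_cases {S : Finset E} {e : E} {a b : V} (hab : G.ends e = s(a, b)) :
    ∀ {u z : V}, G.ReachOn (insert e S) u z →
      G.ReachOn S u z ∨ (G.ReachOn S u a ∧ G.ReachOn S b z) ∨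
        (G.ReachOn S u b ∧ G.ReachOn S a z) := by
  intro u z h
  induction h using Relation.ReflTransGen.head_induction_on with
  | refl => exact Or.inl .refl
  | @head p q hpq hqz ih =>
    obtain ⟨e', he', hends'⟩ := hpq
    rcases Finset.mem_insert.mp he' with he' | he'
    · subst he'
      have hs : s(p, q) = s(a, b) := by rw [← hends', hab]
      rcases Sym2.eq_iff.mp hs with ⟨hpa, hqb⟩ | ⟨hpb, hqa⟩
      · subst hpa; subst hqb
        rcases ih with ih | ⟨ih1, ih2⟩ | ⟨ih1, ih2⟩
        · exact Or.inr (Or.inl ⟨.refl, ih⟩)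
        · exact Or.inr (Or.inl ⟨.refl, ih2⟩)
        · exact Or.inl ih2
      · subst hpb; subst hqa
        rcases ih with ih | ⟨ih1, ih2⟩ | ⟨ih1, ih2⟩
        · exact Or.inr (Or.inr ⟨.refl, ih⟩)
        · exact Or.inl ih2
        · exact Or.inr (Or.inr ⟨.refl, ih2⟩)
    · have hstep : G.AdjOn S p q := ⟨e', he', hends'⟩
      rcases ih with ih | ⟨ih1, ih2⟩ | ⟨ih1, ih2⟩
      · exact Or.inl (.head hstep ih)
      · exact Or.inr (Or.inl ⟨.head hstep ih1, ih2⟩)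
      · exact Or.inr (Or.inr ⟨.head hstep ih1, ih2⟩)

/-- The connected component of `v` in `(V, S)`. -/
noncomputable def comp (G : Multigraph V E) (S : Finset E) (v : V) : Finset V :=
  univ.filter fun w => G.ReachOn S v w

/-- The number of connected components of `(V, S)`. -/
noncomputable def ncomp (G : Multigraph V E) (S : Finset E) : ℕ :=
  (univ.image (comp G S)).card

lemma mem_comp_self (G : Multigraph V E) (S : Finset E) (v : V) : v ∈ comp G S v :=
  Finset.mem_filter.mpr ⟨Finset.mem_univ _, .refl⟩

lemma comp_eq_of_reach {S : Finset E} {u v : V} (h : G.ReachOn S u v) :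
    comp G S u = comp G S v := by
  ext w
  simp only [comp, Finset.mem_filter, Finset.mem_univ, true_and]
  exact ⟨fun h2 => (reachOn_symm h).trans h2, fun h2 => h.trans h2⟩

lemma reach_of_comp_eq {S : Finset E} {u v : V} (h : comp G S u = comp G S v) :
    G.ReachOn S u v := by
  have := mem_comp_self G S v
  rw [← h] at this
  exact (Finset.mem_filter.mp this).2

lemma ncomp_le_insert (G : Multigraph V E) (S : Finset E) (e : E) :
    ncomp G S ≤ ncomp G (insert e S) + 1 := by
  obtain ⟨a, b, hab⟩ := ends_exists G e
  by_cases hX : comp G S a ∈ univ.image (comp G S)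
  · have hkey : ((univ.image (comp G S)).erase (comp G S a)).card ≤
        (univ.image (comp G (insert e S))).card := by
      refine Finset.card_le_card_of_injOn
        (fun C => univ.filter fun z => ∃ v ∈ C, G.ReachOn (insert e S) v z) ?_ ?_
      · intro C hC
        obtain ⟨v, _, rfl⟩ := Finset.mem_image.mp (Finset.mem_of_mem_erase hC)
        refine Finset.mem_image.mpr ⟨v, Finset.mem_univ _, ?_⟩
        ext z
        simp only [comp, Finset.mem_filter, Finset.mem_univ, true_and]
        constructor
        · exact fun h => ⟨v, .refl, h⟩
        · rintro ⟨w, hw, hwz⟩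
          exact (reachOn_mono (Finset.subset_insert e S) hw).trans hwz
      · intro C₁ hC₁ C₂ hC₂ hF
        simp only [Finset.coe_erase, Set.mem_diff, Finset.mem_coe] at hC₁ hC₂
        obtain ⟨v₁, _, rfl⟩ := Finset.mem_image.mp hC₁.1
        obtain ⟨v₂, _, rfl⟩ := Finset.mem_image.mp hC₂.1
        have h12 : G.ReachOn (insert e S) v₁ v₂ := by
          have hmem : v₂ ∈ (fun C => univ.filter fun z => ∃ v ∈ C, G.ReachOn (insert e S) v z)
              (comp G S v₂) := by
            simp only
            exact Finset.mem_filter.mpr ⟨Finset.mem_univ _, v₂, mem_comp_self G S v₂, .refl⟩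
          rw [← hF] at hmem
          simp only [Finset.mem_filter] at hmem
          obtain ⟨-, w, hw, hwz⟩ := hmem
          have hw2 : G.ReachOn S v₁ w := by
            have := hw
            simp only [comp, Finset.mem_filter, Finset.mem_univ, true_and] at this
            exact this
          exact (reachOn_mono (Finset.subset_insert e S) hw2).trans hwz
        rcases reachOn_insert_cases hab h12 with h | ⟨h1, h2⟩ | ⟨h1, h2⟩
        · exact comp_eq_of_reach h
        · exact absurd (comp_eq_of_reach h1) (by simpa using hC₁.2)
        · exact absurd (comp_eq_of_reach (reachOn_symm h2)) (by simpa using hC₂.2)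
    have := Finset.card_erase_of_mem hX
    unfold ncomp
    omega
  · exact absurd (Finset.mem_image.mpr ⟨a, Finset.mem_univ _, rfl⟩) hX

lemma card_le_card_add_ncomp (G : Multigraph V E) (S : Finset E) :
    Fintype.card V ≤ S.card + ncomp G S := by
  induction S using Finset.induction_on with
  | empty =>
    have hcomp : ∀ v : V, comp G (∅ : Finset E) v = {v} := by
      intro v
      ext w
      simp only [comp, Finset.mem_filter, Finset.mem_univ, true_and, Finset.mem_singleton]
      have hiff : G.ReachOn ∅ v w ↔ w = v :=
        Relation.reflTransGen_iff_eq (fun c hc => by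
          obtain ⟨e, he, -⟩ := hc
          exact absurd he (Finset.notMem_empty e))
      rw [hiff]
    have : ncomp G (∅ : Finset E) = Fintype.card V := by
      unfold ncomp
      have : univ.image (comp G (∅ : Finset E)) = univ.image (fun v : V => ({v} : Finset V)) := by
        apply Finset.image_congr
        intro v _
        exact hcomp v
      rw [this, Finset.card_image_of_injective _ Finset.singleton_injective, Finset.card_univ]
    simp [this]
  | @insert e S henS ih =>
    have h2 := ncomp_le_insert G S e
    have h3 : (insert e S).card = S.card + 1 := Finset.card_insert_of_notMem henS
    omega

lemma card_le_of_conn (G : Multigraph V E) (S : Finset E) (hne : Nonempty V) (hconn : ∀ x y : V, G.ReachOn S x y) :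
    Fintype.card V ≤ S.card + 1 := by
  have h1 := card_le_card_add_ncomp G S
  have h2 : ncomp G S = 1 := by
    unfold ncomp
    have : univ.image (comp G S) = {univ} := by
      rw [Finset.eq_singleton_iff_unique_mem]
      obtain ⟨v⟩ := hne
      constructor
      · refine Finset.mem_image.mpr ⟨v, Finset.mem_univ _, ?_⟩
        ext w
        simp only [comp, Finset.mem_filter, Finset.mem_univ, true_and, iff_true]
        exact hconn v w
      · intro C hC
        obtain ⟨u, _, rfl⟩ := Finset.mem_image.mp hC
        ext w
        simp only [comp, Finset.mem_filter, Finset.mem_univ, true_and, iff_true]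
        exact hconn u w
    rw [this, Finset.card_singleton]
  omega

/-- Every edge of a spanning tree is a bridge. -/
lemma not_reach_erase {T : Finset E} (hT : G.IsSpanningTree T) {e : E} (he : e ∈ T)
    {a b : V} (hab : G.ends e = s(a, b)) : ¬ G.ReachOn (T.erase e) a b := by
  intro hr
  have hconn : ∀ x y : V, G.ReachOn (T.erase e) x y := by
    intro x y
    have hxy := hT.1 x y
    induction hxy with
    | refl => exact .refl
    | @tail c d h1 h2 ih =>
      obtain ⟨e', he', hends'⟩ := h2
      by_cases hee : e' = e
      · subst hee
        have hs : s(c, d) = s(a, b) := by rw [← hends', hab]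
        rcases Sym2.eq_iff.mp hs with ⟨hca, hdb⟩ | ⟨hcb, hda⟩
        · subst hca; subst hdb; exact ih.trans hr
        · subst hcb; subst hda; exact ih.trans (reachOn_symm hr)
      · exact ih.tail ⟨e', Finset.mem_erase.mpr ⟨hee, he'⟩, hends'⟩
  have h1 := card_le_of_conn G (T.erase e) ⟨a⟩ hconn
  rw [Finset.card_erase_of_mem he] at h1
  have h2 := hT.2
  have h3 : 1 ≤ T.card := Finset.card_pos.mpr ⟨e, he⟩
  have h4 : 0 < Fintype.card V := Fintype.card_pos_iff.mpr ⟨a⟩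
  omega


section chains

variable {α : Type} {R : α → α → Prop}

/-- Explicit walks: `ChainTo R a l b` holds when `a :: l` is an `R`-walk ending at `b`. -/
inductive ChainTo (R : α → α → Prop) : α → List α → α → Prop
  | nil (a : α) : ChainTo R a [] a
  | cons {a b c : α} {l : List α} : R a b → ChainTo R b l c → ChainTo R a (b :: l) c

lemma chainTo_rtg {a b : α} {l : List α} (h : ChainTo R a l b) :
    Relation.ReflTransGen R a b := by
  induction h with
  | nil => exact .refl
  | cons h1 _ ih => exact Relation.ReflTransGen.head h1 ih

lemma chainTo_append {a b c : α} {l : List α} (h : ChainTo R a l b) (h2 : R b c) :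
    ChainTo R a (l ++ [c]) c := by
  induction h with
  | nil => exact ChainTo.cons h2 (ChainTo.nil c)
  | cons h1 _ ih => exact ChainTo.cons h1 (ih h2)

lemma rtg_chainTo {a b : α} (h : Relation.ReflTransGen R a b) : ∃ l, ChainTo R a l b := by
  induction h with
  | refl => exact ⟨[], ChainTo.nil a⟩
  | tail _ h2 ih =>
    obtain ⟨l, hl⟩ := ih
    exact ⟨l ++ [_], chainTo_append hl h2⟩

lemma chainTo_mem {a b w : α} {l : List α} (h : ChainTo R a l b) (hw : w ∈ l) :
    ∃ t, ChainTo R w t b ∧ t ⊆ l ∧ t.length < l.length := by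
  induction h with
  | nil => exact absurd hw List.not_mem_nil
  | @cons p q c l' h1 h2 ih =>
    rcases List.mem_cons.mp hw with rfl | hw'
    · exact ⟨l', h2, List.subset_cons_self _ _, by simp⟩
    · obtain ⟨t, ht1, ht2, ht3⟩ := ih hw'
      exact ⟨t, ht1, fun v hv => List.mem_cons_of_mem _ (ht2 hv), by simp; omega⟩

lemma chainTo_nodup_aux [DecidableEq α] {b : α} :
    ∀ (n : ℕ) (l : List α) (a : α), l.length ≤ n → ChainTo R a l b →
    ∃ l', ChainTo R a l' b ∧ l' ⊆ l ∧ (a :: l').Nodup := by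
  intro n
  induction n with
  | zero =>
    intro l a hl h
    rw [Nat.le_zero, List.length_eq_zero_iff] at hl
    subst hl
    cases h
    exact ⟨[], ChainTo.nil _, List.Subset.refl _, List.nodup_singleton _⟩
  | succ n ih =>
    intro l a hl h
    cases h with
    | nil => exact ⟨[], ChainTo.nil _, List.Subset.refl _, List.nodup_singleton _⟩
    | @cons _ q _ t h1 h2 =>
      by_cases ha : a ∈ q :: t
      · obtain ⟨t₂, ht₂, hsub, hlen⟩ := chainTo_mem (ChainTo.cons h1 h2) ha
        have hlen2 : t₂.length ≤ n := by
          simp only [List.length_cons] at hl hlen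
          omega
        obtain ⟨l', h1', h2', h3'⟩ := ih t₂ a hlen2 ht₂
        exact ⟨l', h1', fun v hv => hsub (h2' hv), h3'⟩
      · obtain ⟨l', h1', h2', h3'⟩ := ih t q (by simp at hl; omega) h2
        refine ⟨q :: l', ChainTo.cons h1 h1', ?_, ?_⟩
        · intro v hv
          rcases List.mem_cons.mp hv with rfl | hv'
          · exact List.mem_cons_self
          · exact List.mem_cons_of_mem _ (h2' hv')
        · rw [List.nodup_cons]
          refine ⟨fun hmem => ha ?_, h3'⟩
          rcases List.mem_cons.mp hmem with rfl | hmem'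
          · exact List.mem_cons_self
          · exact List.mem_cons_of_mem _ (h2' hmem')

lemma rtg_nodup_chainTo [DecidableEq α] {a b : α} (h : Relation.ReflTransGen R a b) :
    ∃ l, ChainTo R a l b ∧ (a :: l).Nodup := by
  obtain ⟨l0, hc0⟩ := rtg_chainTo h
  obtain ⟨l, h1, _, h3⟩ := chainTo_nodup_aux l0.length l0 a le_rfl hc0
  exact ⟨l, h1, h3⟩

end chains

lemma chainTo_avoid {S : Finset E} {x : V} {a b : V} {l : List V}
    (h : ChainTo (G.AdjOn S) a l b) (hx : ∀ v ∈ a :: l, v ≠ x) :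
    ChainTo (G.AdjOnAvoid S x) a l b := by
  induction h with
  | nil => exact ChainTo.nil _
  | @cons p q c l' h1 h2 ih =>
    refine ChainTo.cons ⟨h1, hx p (List.mem_cons_self), hx q ?_⟩ (ih ?_)
    · exact List.mem_cons_of_mem _ (List.mem_cons_self)
    · intro v hv
      exact hx v (List.mem_cons_of_mem _ hv)

/-- In a spanning tree, the "separation" relation is antisymmetric:
if every walk from `w` to `r` passes through `y`, then `y` has a walk to `r` avoiding `w`. -/
lemma sep_antisymm {T : Finset E} (hT : G.IsSpanningTree T) {r y w : V}
    (hwD : ¬ Relation.ReflTransGen (G.AdjOnAvoid T y) w r) (hwy : w ≠ y) :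
    Relation.ReflTransGen (G.AdjOnAvoid T w) y r := by
  obtain ⟨l, hc, hnd⟩ := rtg_nodup_chainTo (hT.1 y r)
  have hynl : y ∉ l := (List.nodup_cons.mp hnd).1
  by_cases hmem : w ∈ l
  · exfalso
    obtain ⟨t, hct, htsub, -⟩ := chainTo_mem hc hmem
    apply hwD
    refine chainTo_rtg (chainTo_avoid hct ?_)
    intro v hv
    rcases List.mem_cons.mp hv with rfl | hv'
    · exact hwy
    · exact fun hvy => hynl (hvy ▸ htsub hv')
  · refine chainTo_rtg (chainTo_avoid hc ?_)
    intro v hv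
    rcases List.mem_cons.mp hv with rfl | hv'
    · exact Ne.symm hwy
    · exact fun hvw => hmem (hvw ▸ hv')

/-- The set of vertices whose every `T`-walk to the root `r` passes through `y`. -/
noncomputable def Dset (G : Multigraph V E) (T : Finset E) (r y : V) : Finset V :=
  univ.filter fun z => ¬ Relation.ReflTransGen (G.AdjOnAvoid T y) z r

lemma not_mem_Dset {T : Finset E} {r y z : V}
    (h : Relation.ReflTransGen (G.AdjOnAvoid T y) z r) : z ∉ Dset G T r y := by
  simp only [Dset, Finset.mem_filter, Finset.mem_univ, true_and, not_not]
  exact h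

lemma of_not_mem_Dset {T : Finset E} {r y z : V} (h : z ∉ Dset G T r y) :
    Relation.ReflTransGen (G.AdjOnAvoid T y) z r := by
  simp only [Dset, Finset.mem_filter, Finset.mem_univ, true_and, not_not] at h
  exact h

lemma mem_Dset {T : Finset E} {r y z : V}
    (h : ¬ Relation.ReflTransGen (G.AdjOnAvoid T y) z r) : z ∈ Dset G T r y := by
  simp only [Dset, Finset.mem_filter, Finset.mem_univ, true_and]
  exact h

lemma root_not_mem_Dset {T : Finset E} {r y : V} : r ∉ Dset G T r y :=
  not_mem_Dset .refl

lemma self_mem_Dset {T : Finset E} {r y : V} (hyr : y ≠ r) : y ∈ Dset G T r y := by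
  refine mem_Dset fun h => ?_
  rcases Relation.ReflTransGen.cases_head h with h' | ⟨c, ⟨_, hyy, _⟩, _⟩
  · exact hyr h'
  · exact hyy rfl

lemma crossing {β : Type} {R : β → β → Prop} {P : β → Prop} {a b : β}
    (h : Relation.ReflTransGen R a b) (ha : ¬ P a) : P b → ∃ u v, ¬ P u ∧ P v ∧ R u v := by
  induction h with
  | refl => exact fun hb => absurd hb ha
  | @tail c d h1 h2 ih =>
    intro hd
    by_cases hc : P c
    · exact ih hc
    · exact ⟨c, d, hc, hd, h2⟩

lemma visit {S : Finset E} {y w z r : V} (h : Relation.ReflTransGen (G.AdjOnAvoid S y) z r) :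
    Relation.ReflTransGen (G.AdjOnAvoid S w) z r ∨
      Relation.ReflTransGen (G.AdjOnAvoid S y) w r := by
  induction h using Relation.ReflTransGen.head_induction_on with
  | refl => exact Or.inl .refl
  | @head p q hpq hqr ih =>
    rcases ih with ih | ih
    · by_cases hpw : p = w
      · exact Or.inr (hpw ▸ Relation.ReflTransGen.head hpq hqr)
      · by_cases hqw : q = w
        · exact Or.inr (hqw ▸ hqr)
        · exact Or.inl (.head ⟨hpq.1, hpw, hqw⟩ ih)
    · exact Or.inr ih

lemma Dset_subset {T : Finset E} {r y w : V} (hw : w ∈ Dset G T r y) :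
    Dset G T r w ⊆ Dset G T r y := by
  intro z hz
  refine mem_Dset fun hzy => ?_
  rcases visit (w := w) hzy with h | h
  · simp only [Dset, Finset.mem_filter, Finset.mem_univ, true_and] at hz
    exact hz h
  · simp only [Dset, Finset.mem_filter, Finset.mem_univ, true_and] at hw
    exact hw h

lemma leaf_unique_edge {T : Finset E} {x : V} (hx : G.IsLeafVertex T x) :
    ∃ g, g ∈ T ∧ x ∈ G.ends g ∧ ∀ e ∈ T, x ∈ G.ends e → e = g := by
  obtain ⟨g, hg⟩ := Finset.card_eq_one.mp hx
  have hgmem := hg ▸ Finset.mem_singleton_self g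
  rw [Finset.mem_filter] at hgmem
  refine ⟨g, hgmem.1, hgmem.2, fun e he hxe => ?_⟩
  have hmem : e ∈ T.filter (fun e => x ∈ G.ends e) := Finset.mem_filter.mpr ⟨he, hxe⟩
  rw [hg] at hmem
  exact Finset.mem_singleton.mp hmem

lemma stepRel_pivot {T : Finset E} (hT : G.IsSpanningTree T) {x : V} (hx : G.IsLeafVertex T x)
    {g f : E} (hg : g ∈ T) (hxg : x ∈ G.ends g) (hxf : x ∈ G.ends f) (hfg : f ≠ g) :
    StepRel G T (insert f (T.erase g)) := by
  obtain ⟨g₀, hg₀T, hxg₀, huniq⟩ := leaf_unique_edge hx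
  have hgg : g = g₀ := huniq g hg hxg
  subst hgg
  have hfT : f ∉ T := fun hf => hfg (huniq f hf hxf)
  obtain ⟨u, hu⟩ := Sym2.mem_iff_exists.mp hxg
  have hux : u ≠ x := (ends_ne hu).symm
  obtain ⟨w, hw⟩ := Sym2.mem_iff_exists.mp hxf
  have hwx : w ≠ x := (ends_ne hw).symm
  have hsub : T.erase g ⊆ insert f (T.erase g) := Finset.subset_insert _ _
  have hcore : ∀ a b : V, a ≠ x → b ≠ x → G.ReachOn T a b →
      G.ReachOn (insert f (T.erase g)) a b := by
    intro a b ha hb h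
    have h2 := avoid (fun e he hxe => by rw [huniq e he hxe]; exact hu) hux ha hb h
    refine Relation.ReflTransGen.mono ?_ _ _ h2
    rintro p q ⟨⟨e, he, hends⟩, hp, hq⟩
    refine ⟨e, hsub (Finset.mem_erase.mpr ⟨?_, he⟩), hends⟩
    intro heg
    subst heg
    rw [hends, Sym2.mem_iff] at hxg
    rcases hxg with h' | h'
    · exact hp h'.symm
    · exact hq h'.symm
  have hxw : G.ReachOn (insert f (T.erase g)) x w :=
    Relation.ReflTransGen.single ⟨f, Finset.mem_insert_self _ _, hw⟩
  have hconn : ∀ a b : V, G.ReachOn (insert f (T.erase g)) a b := by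
    intro a b
    by_cases ha : a = x <;> by_cases hb : b = x
    · subst ha; subst hb; exact .refl
    · subst ha; exact hxw.trans (hcore w b hwx hb (hT.1 w b))
    · subst hb; exact (hcore a w ha hwx (hT.1 a w)).trans (reachOn_symm hxw)
    · exact hcore a b ha hb (hT.1 a b)
  have hcard : (insert f (T.erase g)).card = Fintype.card V - 1 := by
    rw [Finset.card_insert_of_notMem (fun h => hfT (Finset.mem_of_mem_erase h)),
      Finset.card_erase_of_mem hg₀T]
    have h1 : 1 ≤ T.card := Finset.card_pos.mpr ⟨g, hg₀T⟩
    have h2 := hT.2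
    omega
  exact ⟨⟨hconn, hcard⟩, g, f, ⟨hg₀T, x, hxg, hx⟩, hfT, rfl⟩

lemma of_mem_Dset {T : Finset E} {r y z : V} (h : z ∈ Dset G T r y) :
    ¬ Relation.ReflTransGen (G.AdjOnAvoid T y) z r := by
  simp only [Dset, Finset.mem_filter, Finset.mem_univ, true_and] at h
  exact h

/-- Key lemma: in a 2-connected multigraph, any vertex `y ≠ r` can be made into a leaf of a
spanning tree by leaf exchanges, only ever removing edges incident to the branch of `y`. -/
lemma makeLeaf (h2 : G.TwoConnected) (r : V) : ∀ (m : ℕ) (T : Finset E) (y : V),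
    G.IsSpanningTree T → y ≠ r → (Dset G T r y).card ≤ m →
    ∃ T₂, Relation.ReflTransGen (StepRel G) T T₂ ∧ G.IsSpanningTree T₂ ∧
      G.IsLeafVertex T₂ y ∧
      ∀ e ∈ T, e ∉ T₂ → ∃ x, x ∈ G.ends e ∧ x ∈ Dset G T r y ∧ x ≠ y := by
  intro m
  induction m with
  | zero =>
    intro T y hT hyr hcard
    have h1 : 0 < (Dset G T r y).card := Finset.card_pos.mpr ⟨y, self_mem_Dset hyr⟩
    omega
  | succ m ih =>
    intro T y hT hyr hcard
    by_cases hbase : ∀ w ∈ Dset G T r y, w = y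
    · -- `y` is already a leaf.
      have hwalk := hT.1 y r
      rcases Relation.ReflTransGen.cases_head hwalk with heq | ⟨c, ⟨e₁, he₁, hends₁⟩, -⟩
      · exact absurd heq hyr
      have hcy : c ≠ y := (ends_ne hends₁).symm
      have huniq : ∀ e' ∈ T, y ∈ G.ends e' → e' = e₁ := by
        intro e' he' hye'
        by_contra hne
        obtain ⟨c', hc'⟩ := Sym2.mem_iff_exists.mp hye'
        have hcy' : c' ≠ y := (ends_ne hc').symm
        have hcD : c ∉ Dset G T r y := fun h => hcy (hbase c h)
        have hc'D : c' ∉ Dset G T r y := fun h => hcy' (hbase c' h)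
        have hstep : ∀ {p q : V}, G.AdjOnAvoid T y p q → G.AdjOn (T.erase e₁) p q := by
          rintro p q ⟨⟨e, he, hends⟩, hp, hq⟩
          refine ⟨e, Finset.mem_erase.mpr ⟨?_, he⟩, hends⟩
          intro hee
          subst hee
          have hymem : y ∈ G.ends e := by rw [hends₁]; exact Sym2.mem_mk_left _ _
          rw [hends, Sym2.mem_iff] at hymem
          rcases hymem with h' | h'
          · exact hp h'.symm
          · exact hq h'.symm
        have hreach : G.ReachOn (T.erase e₁) y c := by
          have w1 : G.ReachOn (T.erase e₁) c' r :=
            Relation.ReflTransGen.mono (fun p q h => hstep h) _ _ (of_not_mem_Dset hc'D)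
          have w2 : G.ReachOn (T.erase e₁) c r :=
            Relation.ReflTransGen.mono (fun p q h => hstep h) _ _ (of_not_mem_Dset hcD)
          have w0 : G.AdjOn (T.erase e₁) y c' := ⟨e', Finset.mem_erase.mpr ⟨hne, he'⟩, hc'⟩
          exact (Relation.ReflTransGen.single w0).trans (w1.trans (reachOn_symm w2))
        exact not_reach_erase hT he₁ hends₁ hreach
      have hleaf : G.IsLeafVertex T y := by
        have hfil : T.filter (fun e => y ∈ G.ends e) = {e₁} := by
          rw [Finset.eq_singleton_iff_unique_mem]
          exact ⟨Finset.mem_filter.mpr ⟨he₁, by rw [hends₁]; exact Sym2.mem_mk_left _ _⟩,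
            fun e' h' => huniq e' (Finset.mem_filter.mp h').1 (Finset.mem_filter.mp h').2⟩
        unfold Multigraph.IsLeafVertex Multigraph.treeDegree
        rw [hfil, Finset.card_singleton]
      exact ⟨T, .refl, hT, hleaf, fun e he hne => absurd he hne⟩
    · push_neg at hbase
      obtain ⟨w₀, hw₀D, hw₀y⟩ := hbase
      have hwalk2 := h2.2 y w₀ r hw₀y (Ne.symm hyr)
      obtain ⟨w, z, hwP, hzD, hadj⟩ :=
        crossing (P := fun v => v ∉ Dset G T r y) hwalk2 (not_not.mpr hw₀D) root_not_mem_Dset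
      have hwD : w ∈ Dset G T r y := not_not.mp hwP
      obtain ⟨⟨estar, hends⟩, hwyne, hzyne⟩ := hadj
      have hwr : w ≠ r := fun h => root_not_mem_Dset (h ▸ hwD)
      have hDsub : Dset G T r w ⊆ Dset G T r y := Dset_subset hwD
      have hyDw : y ∉ Dset G T r w := not_mem_Dset (sep_antisymm hT (of_mem_Dset hwD) hwyne)
      have hcardw : (Dset G T r w).card ≤ m := by
        have hsub2 : Dset G T r w ⊆ (Dset G T r y).erase y := by
          intro v hv
          exact Finset.mem_erase.mpr ⟨fun h => hyDw (h ▸ hv), hDsub hv⟩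
        have hc2 := Finset.card_le_card hsub2
        rw [Finset.card_erase_of_mem (self_mem_Dset hyr)] at hc2
        omega
      obtain ⟨T₁, hsteps₁, hT₁, hleafw, hrem₁⟩ := ih T w hT hwr hcardw
      have hD1 : ∀ z', z' ∉ Dset G T r y → z' ∉ Dset G T₁ r y := by
        intro z' hz'
        have hz'' := of_not_mem_Dset hz'
        refine not_mem_Dset ?_
        induction hz'' using Relation.ReflTransGen.head_induction_on with
        | refl => exact .refl
        | @head p q hpq hqr ihh =>
          obtain ⟨⟨e, he, hends'⟩, hpy, hqy⟩ := hpq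
          have heT₁ : e ∈ T₁ := by
            by_contra hneT₁
            obtain ⟨x, hx1, hx2, hx3⟩ := hrem₁ e he hneT₁
            have hxD : x ∈ Dset G T r y := hDsub hx2
            rw [hends', Sym2.mem_iff] at hx1
            rcases hx1 with rfl | rfl
            · exact of_mem_Dset hxD
                (Relation.ReflTransGen.head ⟨⟨e, he, hends'⟩, hpy, hqy⟩ hqr)
            · exact of_mem_Dset hxD hqr
          exact Relation.ReflTransGen.head ⟨⟨e, heT₁, hends'⟩, hpy, hqy⟩
            (ihh (not_mem_Dset hqr))
      obtain ⟨gw, hgwT₁, hwgw, huniqw⟩ := leaf_unique_edge hleafw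
      obtain ⟨uw, huw⟩ := Sym2.mem_iff_exists.mp hwgw
      have huww : uw ≠ w := (ends_ne huw).symm
      have hwEstar : w ∈ G.ends estar := by rw [hends]; exact Sym2.mem_mk_left _ _
      obtain ⟨T₂, hsteps₁₂, hT₂, hestarT₂, heraseSub, hT₁diff⟩ :
          ∃ T₂, Relation.ReflTransGen (StepRel G) T₁ T₂ ∧ G.IsSpanningTree T₂ ∧
            estar ∈ T₂ ∧ T₁.erase gw ⊆ T₂ ∧ ∀ e ∈ T₁, e ∉ T₂ → e = gw := by
        by_cases hge : estar = gw
        · exact ⟨T₁, .refl, hT₁, hge ▸ hgwT₁, Finset.erase_subset _ _,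
            fun e he hne => absurd he hne⟩
        · have hstep := stepRel_pivot hT₁ hleafw hgwT₁ hwgw hwEstar hge
          refine ⟨insert estar (T₁.erase gw), Relation.ReflTransGen.single hstep, hstep.1,
            Finset.mem_insert_self _ _, Finset.subset_insert _ _, ?_⟩
          intro e he hne
          by_contra hnegw
          exact hne (Finset.mem_insert_of_mem (Finset.mem_erase.mpr ⟨hnegw, he⟩))
      have hkey : ∀ z', z' ∉ Dset G T₁ r y → z' ≠ w → z' ∉ Dset G T₂ r y := by
        intro z' hz' hz'w
        have h0 := of_not_mem_Dset hz'
        have h1 : Relation.ReflTransGen (G.AdjOn (T₁.filter fun e => ¬ y ∈ G.ends e)) z' r :=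
          Relation.ReflTransGen.mono (fun p q h => adjOnAvoid_iff.mp h) _ _ h0
        have huniq2 : ∀ e ∈ (T₁.filter fun e => ¬ y ∈ G.ends e), w ∈ G.ends e →
            G.ends e = s(w, uw) := by
          intro e he hwe
          rw [huniqw e (Finset.mem_filter.mp he).1 hwe]
          exact huw
        have h3 := avoid huniq2 huww hz'w (Ne.symm hwr) h1
        refine not_mem_Dset (Relation.ReflTransGen.mono ?_ _ _ h3)
        rintro p q ⟨⟨e, he, hends'⟩, hpw, hqw⟩
        rw [Finset.mem_filter] at he
        have hey : ¬ y ∈ G.ends e := he.2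
        rw [hends', Sym2.mem_iff] at hey
        push_neg at hey
        refine ⟨⟨e, ?_, hends'⟩, Ne.symm hey.1, Ne.symm hey.2⟩
        refine heraseSub (Finset.mem_erase.mpr ⟨?_, he.1⟩)
        intro hegw
        subst hegw
        rw [hends', Sym2.mem_iff] at hwgw
        rcases hwgw with h' | h'
        · exact hpw h'.symm
        · exact hqw h'.symm
      have hwD₂ : w ∉ Dset G T₂ r y := by
        have hzD₂ : z ∉ Dset G T₂ r y := hkey z (hD1 z hzD) (fun h => (h ▸ hzD) hwD)
        exact not_mem_Dset (Relation.ReflTransGen.head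
          ⟨⟨estar, hestarT₂, hends⟩, hwyne, hzyne⟩ (of_not_mem_Dset hzD₂))
      have hD₂sub : Dset G T₂ r y ⊆ (Dset G T r y).erase w := by
        intro v hv
        refine Finset.mem_erase.mpr ⟨fun h => hwD₂ (h ▸ hv), ?_⟩
        by_contra hvD
        by_cases hvw : v = w
        · exact hwD₂ (hvw ▸ hv)
        · exact hkey v (hD1 v hvD) hvw hv
      have hcard₂ : (Dset G T₂ r y).card ≤ m := by
        have hc3 := Finset.card_le_card hD₂sub
        rw [Finset.card_erase_of_mem hwD] at hc3
        omega
      obtain ⟨T₃, hsteps₃, hT₃, hleafy, hrem₃⟩ := ih T₂ y hT₂ hyr hcard₂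
      refine ⟨T₃, (hsteps₁.trans hsteps₁₂).trans hsteps₃, hT₃, hleafy, ?_⟩
      intro e he hne
      by_cases he₁ : e ∈ T₁
      · by_cases he₂ : e ∈ T₂
        · obtain ⟨x, hx1, hx2, hx3⟩ := hrem₃ e he₂ hne
          exact ⟨x, hx1, Finset.mem_of_mem_erase (hD₂sub hx2), hx3⟩
        · have hegw : e = gw := hT₁diff e he₁ he₂
          exact ⟨w, hegw ▸ hwgw, hwD, hwyne⟩
      · obtain ⟨x, hx1, hx2, hx3⟩ := hrem₁ e he he₁
        exact ⟨x, hx1, hDsub hx2, fun h => hyDw (h ▸ hx2)⟩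

/-- Vertices connected to the root through edges shared by `T` and the goal tree `T'`. -/
noncomputable def Aset (G : Multigraph V E) (T T' : Finset E) (r : V) : Finset V :=
  univ.filter fun z => Relation.ReflTransGen (G.AdjOn (T ∩ T')) z r

lemma mem_Aset_iff {T T' : Finset E} {r z : V} :
    z ∈ Aset G T T' r ↔ Relation.ReflTransGen (G.AdjOn (T ∩ T')) z r := by
  simp [Aset]

lemma root_mem_Aset {T T' : Finset E} {r : V} : r ∈ Aset G T T' r := mem_Aset_iff.mpr .refl

lemma eq_of_Aset_univ {T T' : Finset E} {r : V} (hT : G.IsSpanningTree T)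
    (hT' : G.IsSpanningTree T') (hA : ∀ z : V, z ∈ Aset G T T' r) : T = T' := by
  refine Finset.eq_of_subset_of_card_le ?_ (by rw [hT.2, hT'.2])
  intro e he
  by_contra heT'
  obtain ⟨a, b, hab⟩ := ends_exists G e
  refine not_reach_erase hT he hab ?_
  have hsub : T ∩ T' ⊆ T.erase e := by
    intro f hf
    rw [Finset.mem_inter] at hf
    exact Finset.mem_erase.mpr ⟨fun h => heT' (h ▸ hf.2), hf.1⟩
  have ha := reachOn_mono hsub (mem_Aset_iff.mp (hA a))
  have hb := reachOn_mono hsub (mem_Aset_iff.mp (hA b))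
  exact ha.trans (reachOn_symm hb)

lemma mainrec (h2 : G.TwoConnected) (r : V) {T' : Finset E} (hT' : G.IsSpanningTree T') :
    ∀ (m : ℕ) (T : Finset E), G.IsSpanningTree T → (univ \ Aset G T T' r).card ≤ m →
    Relation.ReflTransGen (StepRel G) T T' := by
  intro m
  induction m with
  | zero =>
    intro T hT hc
    have h0 : univ \ Aset G T T' r = ∅ :=
      Finset.card_eq_zero.mp (le_antisymm hc (Nat.zero_le _))
    have hA : ∀ z : V, z ∈ Aset G T T' r := by
      intro z
      by_contra hz
      have hmem : z ∈ univ \ Aset G T T' r := Finset.mem_sdiff.mpr ⟨Finset.mem_univ _, hz⟩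
      rw [h0] at hmem
      exact absurd hmem (Finset.notMem_empty z)
    rw [eq_of_Aset_univ hT hT' hA]
  | succ m ih =>
    intro T hT hc
    by_cases hA : ∀ z : V, z ∈ Aset G T T' r
    · rw [eq_of_Aset_univ hT hT' hA]
    · push_neg at hA
      obtain ⟨z₀, hz₀⟩ := hA
      obtain ⟨y, w, hyA, hwA, hyw⟩ :=
        crossing (P := fun v => v ∈ Aset G T T' r) (hT'.1 z₀ r) hz₀ root_mem_Aset
      obtain ⟨f', hf'T', hf'ends⟩ := hyw
      have hyr : y ≠ r := fun h => hyA (h ▸ root_mem_Aset)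
      have hAD : ∀ v, v ∈ Aset G T T' r → Relation.ReflTransGen (G.AdjOnAvoid T y) v r := by
        intro v hv
        have hwalk := mem_Aset_iff.mp hv
        induction hwalk using Relation.ReflTransGen.head_induction_on with
        | refl => exact .refl
        | @head p q hpq hqr ihh =>
          have hqA : q ∈ Aset G T T' r := mem_Aset_iff.mpr hqr
          have hpA : p ∈ Aset G T T' r := mem_Aset_iff.mpr (.head hpq hqr)
          obtain ⟨e, he, hends⟩ := hpq
          exact Relation.ReflTransGen.head
            ⟨⟨e, (Finset.mem_inter.mp he).1, hends⟩,
              fun h => hyA (h ▸ hpA), fun h => hyA (h ▸ hqA)⟩ (ihh hqA)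
      obtain ⟨T₂, hsteps₂, hT₂, hleafy, hrem⟩ :=
        makeLeaf h2 r (Dset G T r y).card T y hT hyr le_rfl
      have hAT₂ : ∀ v, v ∈ Aset G T T' r → v ∈ Aset G T₂ T' r := by
        intro v hv
        have hwalk := mem_Aset_iff.mp hv
        refine mem_Aset_iff.mpr ?_
        induction hwalk using Relation.ReflTransGen.head_induction_on with
        | refl => exact .refl
        | @head p q hpq hqr ihh =>
          have hqA : q ∈ Aset G T T' r := mem_Aset_iff.mpr hqr
          have hpA : p ∈ Aset G T T' r := mem_Aset_iff.mpr (.head hpq hqr)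
          obtain ⟨e, he, hends⟩ := hpq
          rw [Finset.mem_inter] at he
          have heT₂ : e ∈ T₂ := by
            by_contra hne
            obtain ⟨x, hx1, hx2, hx3⟩ := hrem e he.1 hne
            rw [hends, Sym2.mem_iff] at hx1
            rcases hx1 with rfl | rfl
            · exact of_mem_Dset hx2 (hAD x hpA)
            · exact of_mem_Dset hx2 (hAD x hqA)
          exact Relation.ReflTransGen.head
            ⟨e, Finset.mem_inter.mpr ⟨heT₂, he.2⟩, hends⟩ (ihh hqA)
      obtain ⟨gy, hgyT₂, hygy, huniqy⟩ := leaf_unique_edge hleafy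
      obtain ⟨u₂, hu₂⟩ := Sym2.mem_iff_exists.mp hygy
      have hu₂y : u₂ ≠ y := (ends_ne hu₂).symm
      have hyf' : y ∈ G.ends f' := by rw [hf'ends]; exact Sym2.mem_mk_left _ _
      obtain ⟨T₃, hsteps₂₃, hT₃, hAT₃, hyA₃⟩ :
          ∃ T₃, Relation.ReflTransGen (StepRel G) T₂ T₃ ∧ G.IsSpanningTree T₃ ∧
            (∀ v, v ∈ Aset G T₂ T' r → v ≠ y → v ∈ Aset G T₃ T' r) ∧
              y ∈ Aset G T₃ T' r := by
        have hwA₃gen : ∀ (T₃ : Finset E), f' ∈ T₃ →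
            (∀ v, v ∈ Aset G T₂ T' r → v ≠ y → v ∈ Aset G T₃ T' r) →
              y ∈ Aset G T₃ T' r := by
          intro T₃ hf3 htrans
          have hwA₂ : w ∈ Aset G T₂ T' r := hAT₂ w hwA
          have hwy : w ≠ y := fun h => hyA (h ▸ hwA)
          have hwA₃ : w ∈ Aset G T₃ T' r := htrans w hwA₂ hwy
          exact mem_Aset_iff.mpr (Relation.ReflTransGen.head
            ⟨f', Finset.mem_inter.mpr ⟨hf3, hf'T'⟩, hf'ends⟩ (mem_Aset_iff.mp hwA₃))
        by_cases hgf : gy = f'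
        · exact ⟨T₂, .refl, hT₂, fun v hv _ => hv,
            hwA₃gen T₂ (hgf ▸ hgyT₂) fun v hv _ => hv⟩
        · have hstep := stepRel_pivot hT₂ hleafy hgyT₂ hygy hyf' (fun h => hgf h.symm)
          have htrans : ∀ v, v ∈ Aset G T₂ T' r → v ≠ y →
              v ∈ Aset G (insert f' (T₂.erase gy)) T' r := by
            intro v hv hvy
            have hwalk := mem_Aset_iff.mp hv
            have huniq2 : ∀ e ∈ T₂ ∩ T', y ∈ G.ends e → G.ends e = s(y, u₂) := by
              intro e he hye
              rw [huniqy e (Finset.mem_inter.mp he).1 hye]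
              exact hu₂
            have h3 := avoid huniq2 hu₂y hvy (Ne.symm hyr) hwalk
            refine mem_Aset_iff.mpr (Relation.ReflTransGen.mono ?_ _ _ h3)
            rintro p q ⟨⟨e, he, hends'⟩, hpy, hqy⟩
            rw [Finset.mem_inter] at he
            refine ⟨e, Finset.mem_inter.mpr ⟨?_, he.2⟩, hends'⟩
            refine Finset.mem_insert_of_mem (Finset.mem_erase.mpr ⟨?_, he.1⟩)
            intro hegy
            subst hegy
            rw [hends', Sym2.mem_iff] at hygy
            rcases hygy with h' | h'
            · exact hpy h'.symm
            · exact hqy h'.symm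
          exact ⟨insert f' (T₂.erase gy), Relation.ReflTransGen.single hstep, hstep.1,
            htrans, hwA₃gen _ (Finset.mem_insert_self _ _) htrans⟩
      have hAfinal : ∀ v, v ∈ Aset G T T' r → v ∈ Aset G T₃ T' r := by
        intro v hv
        exact hAT₃ v (hAT₂ v hv) (fun h => hyA (h ▸ hv))
      have hcard₃ : (univ \ Aset G T₃ T' r).card ≤ m := by
        have hsub : univ \ Aset G T₃ T' r ⊆ (univ \ Aset G T T' r).erase y := by
          intro v hv
          rw [Finset.mem_sdiff] at hv
          refine Finset.mem_erase.mpr ⟨fun h => hv.2 (h ▸ hyA₃), Finset.mem_sdiff.mpr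
            ⟨Finset.mem_univ _, fun h => hv.2 (hAfinal v h)⟩⟩
        have hc3 := Finset.card_le_card hsub
        rw [Finset.card_erase_of_mem
          (Finset.mem_sdiff.mpr ⟨Finset.mem_univ _, hyA⟩)] at hc3
        omega
      exact (hsteps₂.trans hsteps₂₃).trans (ih T₃ hT₃ hcard₃)

lemma package {a b : Finset E} (h : Relation.ReflTransGen (StepRel G) a b) :
    ∃ (k : ℕ) (Ts : ℕ → Finset E), Ts 0 = a ∧ Ts k = b ∧
      ∀ i, i < k → StepRel G (Ts i) (Ts (i + 1)) := by
  induction h with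
  | refl => exact ⟨0, fun _ => a, rfl, rfl, fun i hi => absurd hi (Nat.not_lt_zero i)⟩
  | @tail c d hac hcd ihp =>
    obtain ⟨k, Ts, h0, hk, hstep⟩ := ihp
    refine ⟨k + 1, fun i => if i ≤ k then Ts i else d, by simp [h0], by simp, ?_⟩
    intro i hi
    by_cases hik : i < k
    · have h1 : i ≤ k := le_of_lt hik
      have h1' : i + 1 ≤ k := hik
      simp only [if_pos h1, if_pos h1']
      exact hstep i hik
    · have hik' : i = k := by omega
      subst hik'
      simp only [if_pos (le_refl i), if_neg (by omega : ¬ i + 1 ≤ i)]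
      rw [hk]
      exact hcd


end LEC

/-- In a 2-connected multigraph, any spanning tree can be
transformed into any other by repeatedly removing a leaf edge and adding a
non-tree edge. -/
theorem leaf_edge_exchange_connectivity
    {V E : Type} [Fintype V] [Fintype E] [DecidableEq V] [DecidableEq E]
    (G : Multigraph V E) (h2 : G.TwoConnected)
    (Tstart Tgoal : Finset E)
    (hstart : G.IsSpanningTree Tstart) (hgoal : G.IsSpanningTree Tgoal) :
    ∃ (k : ℕ) (Ts : ℕ → Finset E), Ts 0 = Tstart ∧ Ts k = Tgoal ∧
      ∀ i, i < k → G.IsSpanningTree (Ts (i + 1)) ∧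
        ∃ g f : E, G.IsLeafEdge (Ts i) g ∧ f ∉ Ts i ∧
          Ts (i + 1) = insert f ((Ts i).erase g) := by
  classical
  cases isEmpty_or_nonempty V with
  | inl hempty =>
    have h0 : Fintype.card V = 0 := Fintype.card_eq_zero_iff.mpr hempty
    have hs : Tstart = ∅ := Finset.card_eq_zero.mp (by rw [hstart.2, h0])
    have hg : Tgoal = ∅ := Finset.card_eq_zero.mp (by rw [hgoal.2, h0])
    exact ⟨0, fun _ => Tstart, rfl, by rw [hs, hg],
      fun i hi => absurd hi (Nat.not_lt_zero i)⟩
  | inr hne =>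
    obtain ⟨r⟩ := hne
    have hreach := LEC.mainrec h2 r hgoal
      (univ \ LEC.Aset G Tstart Tgoal r).card Tstart hstart le_rfl
    obtain ⟨k, Ts, h0, hk, hstep⟩ := LEC.package hreach
    exact ⟨k, Ts, h0, hk, fun i hi => hstep i hi⟩

end
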